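/- Fix c > 0 and δ ∈ ℝ with c + δ > 0. Then the sequence n ↦ n·kl((c+δ)/n, c/n) converges, as n → ∞ (Filter.atTop), to (c+δ)·log((c+δ)/c) − δ. -/

import Mathlib

open Filter Real

/-- Bernoulli Kullback--Leibler divergence `kl(p,q) = p log(p/q) + (1−p) log((1−p)/(1−q))`. -/
noncomputable def bernKL (p q : ℝ) : ℝ :=
  p * Real.log (p / q) + (1 - p) * Real.log ((1 - p) / (1 - q))

set_option maxHeartbeats 1600000 in
/-- Per-edge KL limit: `n · kl((c+δ)/n, c/n) → (c+δ) log((c+δ)/c) − δ` as `n → ∞`. -/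
theorem per_edge_kl_limit (c δ : ℝ) (hc : 0 < c) (hcδ : 0 < c + δ) :
    Tendsto (fun n : ℕ => (n : ℝ) * bernKL ((c + δ) / n) (c / n)) atTop
      (nhds ((c + δ) * Real.log ((c + δ) / c) - δ)) := by
  have h1 : Tendsto (fun n : ℕ => (n : ℝ) * Real.log (1 + (-(c + δ)) / n)) atTop
      (nhds (-(c + δ))) :=
    (Real.tendsto_mul_log_one_add_div_atTop (-(c + δ))).comp tendsto_natCast_atTop_atTop
  have h2 : Tendsto (fun n : ℕ => (n : ℝ) * Real.log (1 + (-c) / n)) atTop (nhds (-c)) :=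
    (Real.tendsto_mul_log_one_add_div_atTop (-c)).comp tendsto_natCast_atTop_atTop
  have h3 : Tendsto (fun n : ℕ => (1 - (c + δ) / n)) atTop (nhds 1) := by
    have : Tendsto (fun n : ℕ => (c + δ) / (n : ℝ)) atTop (nhds 0) :=
      tendsto_const_nhds.div_atTop tendsto_natCast_atTop_atTop
    simpa using tendsto_const_nhds.sub this
  have key : Tendsto (fun n : ℕ => (c + δ) * Real.log ((c + δ) / c) +
      (1 - (c + δ) / n) * (((n : ℝ) * Real.log (1 + (-(c + δ)) / n)) -
        ((n : ℝ) * Real.log (1 + (-c) / n)))) atTop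
      (nhds ((c + δ) * Real.log ((c + δ) / c) - δ)) := by
    have h0 : Tendsto (fun _ : ℕ => (c + δ) * Real.log ((c + δ) / c)) atTop
        (nhds ((c + δ) * Real.log ((c + δ) / c))) := tendsto_const_nhds
    have := h0.add (h3.mul (h1.sub h2))
    convert this using 2 <;> ring
  have hev1 : ∀ᶠ n : ℕ in atTop, (c + δ) / (n : ℝ) < 1 :=
    (tendsto_const_nhds.div_atTop tendsto_natCast_atTop_atTop).eventually
      (eventually_lt_nhds zero_lt_one)
  have hev2 : ∀ᶠ n : ℕ in atTop, c / (n : ℝ) < 1 :=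
    (tendsto_const_nhds.div_atTop tendsto_natCast_atTop_atTop).eventually
      (eventually_lt_nhds zero_lt_one)
  refine key.congr' ?_
  filter_upwards [eventually_gt_atTop 0, hev1, hev2] with n hn hl1 hl2
  have hn' : (0 : ℝ) < n := by exact_mod_cast hn
  have hne : (n : ℝ) ≠ 0 := hn'.ne'
  unfold bernKL
  have e1 : ((c + δ) / n) / (c / n) = (c + δ) / c := by
    field_simp
  have e2 : (1 : ℝ) + (-(c + δ)) / n = 1 - (c + δ) / n := by ring
  have e3 : (1 : ℝ) + (-c) / n = 1 - c / n := by ring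
  rw [e2, e3, e1]
  have h1pos : (0 : ℝ) < 1 - (c + δ) / n ∨ True := Or.inr trivial
  -- log of quotient: need positivity? use log_div with nonzero args? Instead expand:
  have hlogdiv : Real.log ((1 - (c + δ) / n) / (1 - c / n)) =
      Real.log (1 - (c + δ) / n) - Real.log (1 - c / n) :=
    Real.log_div (by linarith) (by linarith)
  rw [hlogdiv]
  field_simp
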